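/- Let f(x) = ∑_{k=t}^{L} c(k) x^k with c(k) ≥ 0, t ≥ 1. If 0 ≤ x ≤ y and f(y) ≤ ε y with 0 ≤ ε ≤ 1, then f(x) ≤ ε y. More generally, the m-fold iterate satisfies f^[m](x) ≤ ε^(∑_{r=0}^{m-1} t^r) y for all m ≥ 1. -/

import Mathlib

/-- Monotone bounding polynomial: `f x ≤ ε y` for `x ≤ y` with `f y ≤ ε y`,
and the `m`-fold iterate satisfies the geometric-sum suppression bound. -/
theorem stmt_6 (t L : ℕ) (ht : 1 ≤ t) (c : ℕ → ℝ) (hc : ∀ k, 0 ≤ c k)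
    (f : ℝ → ℝ) (hf : ∀ x, f x = ∑ k ∈ Finset.Icc t L, c k * x ^ k)
    (ε x y : ℝ) (hε0 : 0 ≤ ε) (hε1 : ε ≤ 1)
    (hx : 0 ≤ x) (hxy : x ≤ y) (hy : f y ≤ ε * y) :
    f x ≤ ε * y ∧
    ∀ m : ℕ, 1 ≤ m → f^[m] x ≤ ε ^ (∑ r ∈ Finset.range m, t ^ r) * y := by
  have hy0 : 0 ≤ y := le_trans hx hxy
  have hεy : 0 ≤ ε * y := mul_nonneg hε0 hy0
  have fnonneg : ∀ z : ℝ, 0 ≤ z → 0 ≤ f z := by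
    intro z hz
    rw [hf z]
    exact Finset.sum_nonneg fun k _ => mul_nonneg (hc k) (pow_nonneg hz k)
  have key : ∀ z δ : ℝ, 0 ≤ z → 0 ≤ δ → δ ≤ 1 → z ≤ δ * y →
      f z ≤ δ ^ t * (ε * y) := by
    intro z δ hz hδ0 hδ1 hzδ
    have h1 : f z ≤ δ ^ t * f y := by
      rw [hf z, hf y, Finset.mul_sum]
      apply Finset.sum_le_sum
      intro k hk
      have hkt : t ≤ k := (Finset.mem_Icc.mp hk).1
      have h2 : z ^ k ≤ (δ * y) ^ k := pow_le_pow_left₀ hz hzδ k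
      have h4 : δ ^ k ≤ δ ^ t := pow_le_pow_of_le_one hδ0 hδ1 hkt
      have h5 : (0:ℝ) ≤ y ^ k := pow_nonneg hy0 k
      calc c k * z ^ k ≤ c k * (δ * y) ^ k :=
            mul_le_mul_of_nonneg_left h2 (hc k)
        _ = c k * (δ ^ k * y ^ k) := by rw [mul_pow]
        _ ≤ c k * (δ ^ t * y ^ k) := by
            apply mul_le_mul_of_nonneg_left _ (hc k)
            exact mul_le_mul_of_nonneg_right h4 h5
        _ = δ ^ t * (c k * y ^ k) := by ring
    calc f z ≤ δ ^ t * f y := h1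
      _ ≤ δ ^ t * (ε * y) := mul_le_mul_of_nonneg_left hy (pow_nonneg hδ0 t)
  have part1 : f x ≤ ε * y := by
    have := key x 1 hx zero_le_one le_rfl (by simpa using hxy)
    simpa using this
  refine ⟨part1, ?_⟩
  have main : ∀ m : ℕ, 0 ≤ f^[m] x ∧
      f^[m] x ≤ ε ^ (∑ r ∈ Finset.range m, t ^ r) * y := by
    intro m
    induction m with
    | zero => simpa using ⟨hx, hxy⟩
    | succ n ih =>
      obtain ⟨ih0, ih1⟩ := ih
      set S := ∑ r ∈ Finset.range n, t ^ r with hS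
      have hδ0 : 0 ≤ ε ^ S := pow_nonneg hε0 S
      have hδ1 : ε ^ S ≤ 1 := pow_le_one₀ hε0 hε1
      have hz0 : 0 ≤ f^[n] x := ih0
      have hstep : f^[n+1] x = f (f^[n] x) := Function.iterate_succ_apply' f n x
      have hb := key _ _ hz0 hδ0 hδ1 ih1
      have hsum : ∑ r ∈ Finset.range (n+1), t ^ r = S * t + 1 := by
        rw [geom_sum_succ, hS]; ring
      constructor
      · rw [hstep]; exact fnonneg _ hz0
      · rw [hstep, hsum]
        calc f (f^[n] x) ≤ (ε ^ S) ^ t * (ε * y) := hb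
          _ = ε ^ (S * t + 1) * y := by rw [pow_succ, pow_mul]; ring
  intro m _
  exact (main m).2
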